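/- Let L be a finite-dimensional nilpotent Lie algebra over a field 𝔽 of characteristic different from 2 such that L' ⊆ Z(L) and dim L − dim Z(L) = 2. Then for any two commuting automorphisms α and β of L, the composite β ∘ α is a commuting automorphism of L. -/

import Mathlib

/-- Let `L` be a finite-dimensional nilpotent Lie algebra over a field `𝔽` of characteristic
different from `2` such that `L' ⊆ Z(L)` and `dim L − dim Z(L) = 2`. Then the composite of any
two commuting automorphisms of `L` is again a commuting automorphism. -/
theorem comp_commuting_of_derived_le_center_codim_two {F L : Type*} [Field F] [LieRing L]
    [LieAlgebra F L] [FiniteDimensional F L] [LieRing.IsNilpotent L]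
    (hchar : ringChar F ≠ 2)
    (hder : LieModule.lowerCentralSeries F L L 1 ≤ LieAlgebra.center F L)
    (hcodim : Module.finrank F L = Module.finrank F ↥(LieAlgebra.center F L) + 2)
    (α β : L ≃ₗ⁅F⁆ L) (hα : ∀ x : L, ⁅α x, x⁆ = 0) (hβ : ∀ x : L, ⁅β x, x⁆ = 0) :
    ∀ x : L, ⁅β (α x), x⁆ = 0 := by
  classical
  set Zi := LieAlgebra.center F L with hZidef
  -- central elements kill brackets on both sides
  have hzr : ∀ z ∈ Zi, ∀ y : L, ⁅y, z⁆ = 0 := fun z hz y => hz y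
  have hzl : ∀ z ∈ Zi, ∀ y : L, ⁅z, y⁆ = 0 := fun z hz y => by
    rw [← lie_skew, hzr z hz y, neg_zero]
  -- automorphisms preserve the center
  have hpres : ∀ (γ : L ≃ₗ⁅F⁆ L) (z : L), z ∈ Zi → γ z ∈ Zi := by
    intro γ z hz y
    have h := γ.map_lie (γ.symm y) z
    rw [hzr z hz, LieEquiv.apply_symm_apply] at h
    exact h.symm.trans γ.toLinearEquiv.map_zero
  have hadd : ∀ (γ : L ≃ₗ⁅F⁆ L) (x y : L), γ (x + y) = γ x + γ y := fun γ x y =>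
    γ.toLinearEquiv.map_add x y
  have hsmul : ∀ (γ : L ≃ₗ⁅F⁆ L) (s : F) (x : L), γ (s • x) = s • γ x := fun γ s x =>
    γ.toLinearEquiv.map_smul s x
  -- complement of the center
  obtain ⟨W, hW⟩ := Submodule.exists_isCompl (Zi : Submodule F L)
  have hWrank : Module.finrank F W = 2 := by
    have h1 := Submodule.finrank_add_eq_of_isCompl hW
    have h2 : Module.finrank F (Zi : Submodule F L) =
        Module.finrank F ↥Zi := rfl
    omega
  let b : Module.Basis (Fin 2) F W := Module.finBasisOfFinrankEq F W hWrank
  set u : L := ((b 0 : W) : L) with hu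
  set v : L := ((b 1 : W) : L) with hv
  set c : L := ⁅u, v⁆ with hc
  -- decomposition of an arbitrary element
  have hdec : ∀ x : L, ∃ (z : L) (s t : F), z ∈ Zi ∧ x = z + s • u + t • v := by
    intro x
    have hx : x ∈ (Zi : Submodule F L) ⊔ W := by rw [hW.sup_eq_top]; trivial
    obtain ⟨z, hz, w, hw, rfl⟩ := Submodule.mem_sup.mp hx
    refine ⟨z, b.repr ⟨w, hw⟩ 0, b.repr ⟨w, hw⟩ 1, hz, ?_⟩
    have := b.sum_repr ⟨w, hw⟩
    rw [Fin.sum_univ_two] at this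
    have hw' : w = b.repr ⟨w, hw⟩ 0 • u + b.repr ⟨w, hw⟩ 1 • v := by
      have := congrArg (Submodule.subtype W) this
      simpa using this.symm
    rw [add_assoc]; exact congrArg (HAdd.hAdd z) hw'
  -- the bracket formula
  have hbr : ∀ z z' : L, z ∈ Zi → z' ∈ Zi → ∀ s t s' t' : F,
      ⁅z + s • u + t • v, z' + s' • u + t' • v⁆ = (s * t' - t * s') • c := by
    intro z z' hz hz' s t s' t'
    have h1 : ∀ y : L, ⁅z, y⁆ = 0 := hzl z hz
    have h2 : ∀ y : L, ⁅y, z'⁆ = 0 := hzr z' hz'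
    have hvu : ⁅v, u⁆ = -c := by rw [hc, ← lie_skew]
    simp only [add_lie, lie_add, smul_lie, lie_smul, h1, h2, lie_self, smul_zero, zero_add,
      add_zero, hvu, ← hc]
    module
  intro x
  by_cases hc0 : c = 0
  · obtain ⟨z, s, t, hz, hx⟩ := hdec x
    obtain ⟨z', s', t', hz', hy⟩ := hdec (β (α x))
    rw [hy, hx]
    -- x was rewritten; need the bracket formula
    rw [hbr z' z hz' hz s' t' s t, hc0, smul_zero]
  · -- coordinates of α u and α v
    obtain ⟨z₁, a₁, a₂, hz₁, h1⟩ := hdec (α u)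
    obtain ⟨z₂, b₁, b₂, hz₂, h2⟩ := hdec (α v)
    have ha₂ : a₂ = 0 := by
      have h := hα u
      rw [h1] at h
      have h' : ⁅z₁ + a₁ • u + a₂ • v, (0:L) + (1:F) • u + (0:F) • v⁆ =
          (a₁ * 0 - a₂ * 1) • c := hbr z₁ 0 hz₁ Zi.zero_mem a₁ a₂ 1 0
      simp only [zero_add, one_smul, zero_smul, add_zero, mul_zero, mul_one, zero_sub] at h'
      rw [h', neg_smul, neg_eq_zero, smul_eq_zero] at h
      tauto
    have hb₁ : b₁ = 0 := by
      have h := hα v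
      rw [h2] at h
      have h' : ⁅z₂ + b₁ • u + b₂ • v, (0:L) + (0:F) • u + (1:F) • v⁆ =
          (b₁ * 1 - b₂ * 0) • c := hbr z₂ 0 hz₂ Zi.zero_mem b₁ b₂ 0 1
      simp only [zero_add, one_smul, zero_smul, add_zero, mul_zero, mul_one, sub_zero] at h'
      rw [h', smul_eq_zero] at h
      tauto
    have hab : a₁ = b₂ := by
      have h := hα (u + v)
      have huv : α (u + v) = (z₁ + z₂) + (a₁ + b₁) • u + (a₂ + b₂) • v := by
        rw [hadd α u v, h1, h2]; module
      rw [huv] at h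
      have h' : ⁅(z₁ + z₂) + (a₁ + b₁) • u + (a₂ + b₂) • v, (0:L) + (1:F) • u + (1:F) • v⁆ =
          ((a₁ + b₁) * 1 - (a₂ + b₂) * 1) • c :=
        hbr (z₁ + z₂) 0 (Zi.add_mem hz₁ hz₂) Zi.zero_mem _ _ 1 1
      simp only [zero_add, one_smul, mul_one] at h'
      rw [h', ha₂, hb₁, add_zero, zero_add, smul_eq_zero, sub_eq_zero] at h
      tauto
    -- α is scalar mod the center
    have hp : ∀ y : L, ∃ w ∈ Zi, α y = a₁ • y + w := by
      intro y
      obtain ⟨z, s, t, hz, rfl⟩ := hdec y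
      refine ⟨α z - a₁ • z + s • z₁ + t • z₂,
        Zi.add_mem (Zi.add_mem (Zi.sub_mem (hpres α z hz) (Zi.smul_mem a₁ hz)) (Zi.smul_mem s hz₁))
          (Zi.smul_mem t hz₂), ?_⟩
      rw [hadd, hadd, hsmul, hsmul, h1, h2, ha₂, hb₁, ← hab]
      module
    obtain ⟨w, hw, hαx⟩ := hp x
    rw [hαx, hadd, hsmul, add_lie, smul_lie, hβ x,
      hzl (β w) (hpres β w hw) x, smul_zero, add_zero]
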